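/- Erasing edges between two blocks yields a mutation-linear identity map: if the index set of B is partitioned as I ∪ J and B' is obtained from B by setting b'_ij = b'_ji = 0 whenever i ∈ I and j ∈ J (keeping all other entries), then every B-coherent linear relation Σ c_i v_i over ℝ is also a B'-coherent linear relation. -/
import Mathlib


open scoped Classical

/-- A skew-symmetrizable integer matrix (an exchange matrix). -/
def SkewSymmetrizable {n : ℕ} (B : Matrix (Fin n) (Fin n) ℤ) : Prop :=
  ∃ d : Fin n → ℤ, (∀ i, 0 < d i) ∧ ∀ i j, d i * B i j = -(d j * B j i)

/-- Matrix mutation at index `k`. -/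
def mutate {n : ℕ} (B : Matrix (Fin n) (Fin n) ℤ) (k : Fin n) : Matrix (Fin n) (Fin n) ℤ :=
  Matrix.of fun i j =>
    if i = k ∨ j = k then -B i j
    else B i j + Int.sign (B k j) * max 0 (B i k * B k j)

/-- Iterated matrix mutation along a sequence. -/
def mutateSeq {n : ℕ} (B : Matrix (Fin n) (Fin n) ℤ) :
    List (Fin n) → Matrix (Fin n) (Fin n) ℤ
  | [] => B
  | k :: ks => mutate (mutateSeq B ks) k

/-- The mutation map `η_k^B : ℝ^n → ℝ^n`. -/
noncomputable def eta {n : ℕ} (B : Matrix (Fin n) (Fin n) ℤ) (k : Fin n)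
    (a : Fin n → ℝ) : Fin n → ℝ :=
  fun j =>
    if j = k then -a k
    else if 0 ≤ a k ∧ 0 ≤ B k j then a j + a k * (B k j : ℝ)
    else if a k ≤ 0 ∧ B k j ≤ 0 then a j - a k * (B k j : ℝ)
    else a j

/-- The composed mutation map for a sequence of indices. -/
noncomputable def etaSeq {n : ℕ} (B : Matrix (Fin n) (Fin n) ℤ) :
    List (Fin n) → (Fin n → ℝ) → (Fin n → ℝ)
  | [] => id
  | k :: ks => fun a => eta (mutateSeq B ks) k (etaSeq B ks a)

/-- A `B`-coherent linear relation `Σ_{i ∈ S} c_i v_i`. -/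
def IsBCoherent {n : ℕ} {σ : Type} (B : Matrix (Fin n) (Fin n) ℤ)
    (S : Finset σ) (c : σ → ℝ) (v : σ → Fin n → ℝ) : Prop :=
  ∀ ks : List (Fin n),
    (∑ i ∈ S, c i • etaSeq B ks (v i)) = (0 : Fin n → ℝ) ∧
    (∑ i ∈ S, c i • (fun j => min (etaSeq B ks (v i) j) 0 : Fin n → ℝ)) = (0 : Fin n → ℝ)

/-- A matrix is blocked relative to `I` if all entries between `I` and its
complement vanish. -/
def Blocked {n : ℕ} (I : Finset (Fin n)) (M : Matrix (Fin n) (Fin n) ℤ) : Prop :=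
  ∀ i j, ¬((i ∈ I) ↔ (j ∈ I)) → M i j = 0

lemma blocked_mutate {n : ℕ} {I : Finset (Fin n)} {M : Matrix (Fin n) (Fin n) ℤ}
    (hM : Blocked I M) (k : Fin n) : Blocked I (mutate M k) := by
  intro i j hij
  simp only [mutate, Matrix.of_apply]
  split_ifs with h
  · simp [hM i j hij]
  · by_cases hik : (i ∈ I) ↔ (k ∈ I)
    · have : ¬((k ∈ I) ↔ (j ∈ I)) := fun hkj => hij (hik.trans hkj)
      simp [hM i j hij, hM k j this]
    · simp [hM i j hij, hM i k hik]

lemma filter_pred_congr {n : ℕ} (I : Finset (Fin n)) {k j : Fin n}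
    (h : (k ∈ I) ↔ (j ∈ I)) :
    (fun m : Fin n => decide ((m ∈ I) ↔ (j ∈ I))) =
      (fun m : Fin n => decide ((m ∈ I) ↔ (k ∈ I))) := by
  funext m
  exact decide_eq_decide.mpr ⟨fun hm => hm.trans h.symm, fun hm => hm.trans h⟩

lemma main_lemma {n : ℕ} (B B' : Matrix (Fin n) (Fin n) ℤ) (I : Finset (Fin n))
    (hB' : ∀ i j, B' i j = if ((i ∈ I) ↔ (j ∈ I)) then B i j else 0) :
    ∀ ks : List (Fin n),
      Blocked I (mutateSeq B' ks) ∧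
      (∀ i j, ((i ∈ I) ↔ (j ∈ I)) →
        mutateSeq B' ks i j
          = mutateSeq B (ks.filter (fun m => decide ((m ∈ I) ↔ (j ∈ I)))) i j) ∧
      (∀ a : Fin n → ℝ, ∀ j : Fin n,
        etaSeq B' ks a j
          = etaSeq B (ks.filter (fun m => decide ((m ∈ I) ↔ (j ∈ I)))) a j) := by
  intro ks
  induction ks with
  | nil =>
      refine ⟨?_, ?_, ?_⟩
      · intro i j hij; simp [mutateSeq, hB' i j, hij]
      · intro i j hij; simp [mutateSeq, hB' i j, hij]
      · intro a j; simp [etaSeq]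
  | cons k ks ih =>
      obtain ⟨hb, hm, he⟩ := ih
      refine ⟨blocked_mutate hb k, ?_, ?_⟩
      · intro i j hij
        by_cases h1 : (k ∈ I) ↔ (j ∈ I)
        · have hfilter : (k :: ks).filter (fun m => decide ((m ∈ I) ↔ (j ∈ I)))
              = k :: ks.filter (fun m => decide ((m ∈ I) ↔ (j ∈ I))) := by
            simp [List.filter_cons, h1]
          rw [hfilter]
          have hik : (i ∈ I) ↔ (k ∈ I) := hij.trans h1.symm
          have e1 := hm i j hij
          have e2 := hm i k hik
          have e3 := hm k j h1
          rw [← filter_pred_congr I h1] at e2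
          show mutate (mutateSeq B' ks) k i j
            = mutate (mutateSeq B (ks.filter (fun m => decide ((m ∈ I) ↔ (j ∈ I))))) k i j
          simp only [mutate, Matrix.of_apply]
          rw [e1, e2, e3]
        · have hik : ¬((i ∈ I) ↔ (k ∈ I)) := fun h => h1 (h.symm.trans hij)
          have hkj : ¬((k ∈ I) ↔ (j ∈ I)) := h1
          have hik' : ¬ i = k := fun h => hik (by rw [h])
          have hjk' : ¬ j = k := fun h => hkj (by rw [h])
          have hfilter : (k :: ks).filter (fun m => decide ((m ∈ I) ↔ (j ∈ I)))
              = ks.filter (fun m => decide ((m ∈ I) ↔ (j ∈ I))) := by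
            simp [List.filter_cons, h1]
          rw [hfilter, ← hm i j hij]
          show mutate (mutateSeq B' ks) k i j = mutateSeq B' ks i j
          simp [mutate, hik', hjk', hb i k hik, hb k j hkj]
      · intro a j
        by_cases h1 : (k ∈ I) ↔ (j ∈ I)
        · have hfilter : (k :: ks).filter (fun m => decide ((m ∈ I) ↔ (j ∈ I)))
              = k :: ks.filter (fun m => decide ((m ∈ I) ↔ (j ∈ I))) := by
            simp [List.filter_cons, h1]
          rw [hfilter]
          have hek : etaSeq B' ks a k
              = etaSeq B (ks.filter (fun m => decide ((m ∈ I) ↔ (j ∈ I)))) a k := by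
            rw [filter_pred_congr I h1]; exact he a k
          have hej := he a j
          have hmkj := hm k j h1
          show eta (mutateSeq B' ks) k (etaSeq B' ks a) j
            = eta (mutateSeq B (ks.filter (fun m => decide ((m ∈ I) ↔ (j ∈ I))))) k
                (etaSeq B (ks.filter (fun m => decide ((m ∈ I) ↔ (j ∈ I)))) a) j
          simp only [eta]
          rw [hek, hej, hmkj]
        · have hkj : ¬((k ∈ I) ↔ (j ∈ I)) := h1
          have hjk' : ¬ j = k := fun h => hkj (by rw [h])
          have hfilter : (k :: ks).filter (fun m => decide ((m ∈ I) ↔ (j ∈ I)))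
              = ks.filter (fun m => decide ((m ∈ I) ↔ (j ∈ I))) := by
            simp [List.filter_cons, h1]
          rw [hfilter, ← he a j]
          show eta (mutateSeq B' ks) k (etaSeq B' ks a) j = etaSeq B' ks a j
          have h0 : mutateSeq B' ks k j = 0 := hb k j hkj
          simp only [eta, h0, if_neg hjk']
          norm_num

/-- Erasing all edges between the blocks `I` and `Iᶜ` of an exchange matrix
yields a mutation-linear identity map: every `B`-coherent linear relation is
also `B'`-coherent. -/
theorem erase_edges_mutationLinear {n : ℕ} (B B' : Matrix (Fin n) (Fin n) ℤ)
    (hB : SkewSymmetrizable B) (I : Finset (Fin n))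
    (hB' : ∀ i j, B' i j = if ((i ∈ I) ↔ (j ∈ I)) then B i j else 0)
    {σ : Type} (S : Finset σ) (c : σ → ℝ) (v : σ → Fin n → ℝ)
    (h : IsBCoherent B S c v) :
    IsBCoherent B' S c v := by
  intro ks
  obtain ⟨-, -, he⟩ := main_lemma B B' I hB' ks
  constructor
  · funext j
    have h1 := congrFun (h (ks.filter (fun m => decide ((m ∈ I) ↔ (j ∈ I))))).1 j
    simp only [Finset.sum_apply, Pi.smul_apply, smul_eq_mul, Pi.zero_apply] at h1 ⊢
    exact (Finset.sum_congr rfl fun i _ => by rw [he (v i) j]).trans h1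
  · funext j
    have h1 := congrFun (h (ks.filter (fun m => decide ((m ∈ I) ↔ (j ∈ I))))).2 j
    simp only [Finset.sum_apply, Pi.smul_apply, smul_eq_mul, Pi.zero_apply] at h1 ⊢
    exact (Finset.sum_congr rfl fun i _ => by rw [he (v i) j]).trans h1
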